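/- Let ν = κ⁺ be an infinite successor cardinal and P a poset with no infinite antichain such that Cov(P) ≥ ν and Cov(P \ ↑x) < ν for every x ∈ P. If (x_α)_{α<β} is a chain in P with β ≤ κ, obtained as an unbounded chain in P, then P cannot be covered by fewer than ν chains using the sets P \ ↑x_α; consequently, every chain of order type ≤ κ in P is bounded above. -/

import Mathlib

open Cardinal

noncomputable def chainCov {α : Type*} [PartialOrder α] (S : Set α) : Cardinal :=
  sInf {c : Cardinal | ∃ F : Set (Set α),
    (∀ T ∈ F, T ⊆ S ∧ IsChain (· ≤ ·) T) ∧ ⋃₀ F = S ∧ #F = c}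

lemma chainCov_witness {α : Type*} [PartialOrder α] (S : Set α) :
    ∃ F : Set (Set α),
      (∀ T ∈ F, T ⊆ S ∧ IsChain (· ≤ ·) T) ∧ ⋃₀ F = S ∧ #F = chainCov S := by
  have hne : {c : Cardinal | ∃ F : Set (Set α),
      (∀ T ∈ F, T ⊆ S ∧ IsChain (· ≤ ·) T) ∧ ⋃₀ F = S ∧ #F = c}.Nonempty := by
    refine ⟨#((fun a => ({a} : Set α)) '' S), (fun a => ({a} : Set α)) '' S, ?_, ?_, rfl⟩
    · rintro T ⟨a, ha, rfl⟩
      exact ⟨Set.singleton_subset_iff.2 ha, Set.Subsingleton.isChain (Set.subsingleton_singleton)⟩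
    · ext b
      simp
  exact csInf_mem hne

theorem small_chains_bounded {α : Type u} [PartialOrder α] (ν κ : Cardinal)
    (hν : ℵ₀ ≤ ν) (hsucc : ν = Order.succ κ)
    (hfa : ∀ A : Set α, IsAntichain (· ≤ ·) A → A.Finite)
    (hcov : ν ≤ chainCov (Set.univ : Set α))
    (hup : ∀ x : α, chainCov (Set.Ici x)ᶜ < ν) :
    ∀ C : Set α, IsChain (· ≤ ·) C → #C ≤ κ → ∃ b : α, ∀ x ∈ C, x ≤ b := by
  intro C _hC hCκ
  by_contra hb
  push_neg at hb
  -- κ is infinite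
  have hκ : ℵ₀ ≤ κ := by
    by_contra h
    push_neg at h
    have : ν < ℵ₀ := by
      rw [hsucc]
      exact Cardinal.isSuccLimit_aleph0.succ_lt h
    exact absurd hν (not_le.2 this)
  -- for each x, a cover of (Ici x)ᶜ by at most κ chains
  have key : ∀ x : α, ∃ F : Set (Set α),
      (∀ T ∈ F, T ⊆ (Set.Ici x)ᶜ ∧ IsChain (· ≤ ·) T) ∧ ⋃₀ F = (Set.Ici x)ᶜ ∧ #F ≤ κ := by
    intro x
    obtain ⟨F, h1, h2, h3⟩ := chainCov_witness ((Set.Ici x)ᶜ)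
    refine ⟨F, h1, h2, ?_⟩
    have := hup x
    rw [hsucc] at this
    rw [h3]
    exact Order.lt_succ_iff.mp this
  choose G hG1 hG2 hG3 using key
  set F : Set (Set α) := ⋃ x ∈ C, G x with hF
  -- F covers univ
  have hcover : ⋃₀ F = (Set.univ : Set α) := by
    apply Set.eq_univ_of_forall
    intro b
    obtain ⟨x, hxC, hxb⟩ := hb b
    have hbmem : b ∈ (Set.Ici x)ᶜ := by simpa using hxb
    rw [← hG2 x] at hbmem
    obtain ⟨T, hT, hbT⟩ := hbmem
    exact ⟨T, Set.mem_biUnion hxC hT, hbT⟩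
  -- cardinality of F
  have hcard : #F ≤ κ := by
    calc #F ≤ #C * ⨆ x : C, #(G x) := Cardinal.mk_biUnion_le _ _
    _ ≤ κ * κ := mul_le_mul' hCκ (ciSup_le' fun i => hG3 i)
    _ = κ := Cardinal.mul_eq_self hκ
  -- chainCov univ ≤ #F
  have hle : chainCov (Set.univ : Set α) ≤ #F := by
    apply csInf_le'
    exact ⟨F, fun T hT => ⟨Set.subset_univ _, by
      obtain ⟨x, hx, hTx⟩ := Set.mem_iUnion₂.mp hT
      exact (hG1 x T hTx).2⟩, hcover, rfl⟩
  have : ν ≤ κ := le_trans hcov (le_trans hle hcard)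
  have : κ < ν := by rw [hsucc]; exact Order.lt_succ κ
  exact absurd ‹ν ≤ κ› (not_le.2 ‹κ < ν›)
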